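/- arXiv:2505.12604 — 4 statements merged into one kernel-verified Lean document; each statement's English description precedes it below -/
import Mathlib

section
/- Let u : A → ℝ be a C² function on the closed annulus A = {x ∈ ℝⁿ : r₀ ≤ |x| ≤ r₁} with 0 < r₀ < r₁, and suppose the Hessian of u is bounded in operator norm by M on A. Then the function r ↦ sup_{|x|=r} u(x) + (M/2) r² is convex on [r₀, r₁]. -/
open Set Metric

section Ray

variable {E : Type*} [NormedAddCommGroup E] [NormedSpace ℝ E]

/-- Key 1D lemma: along a ray `r ↦ r • ω` through the annulus, `u + (M/2)‖·‖²` is convex. -/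
lemma ray_convex (u : E → ℝ) (r₀ r₁ M : ℝ) (hr₀ : 0 < r₀)
    (A : Set E) (hA : A = {x : E | r₀ ≤ ‖x‖ ∧ ‖x‖ ≤ r₁})
    (hu : ContDiffOn ℝ 2 u A)
    (hM : ∀ x ∈ A, ‖iteratedFDerivWithin ℝ 2 u A x‖ ≤ M)
    (ω : E) (hω : ‖ω‖ = 1) :
    ConvexOn ℝ (Icc r₀ r₁) (fun r => u (r • ω) + M / 2 * r ^ 2) := by
  have hnorm : ∀ r ∈ Icc r₀ r₁, ‖r • ω‖ = r := by
    intro r hr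
    rw [norm_smul, hω, mul_one, Real.norm_eq_abs, abs_of_pos (hr₀.trans_le hr.1)]
  have hmem : ∀ r ∈ Icc r₀ r₁, r • ω ∈ A := by
    intro r hr
    rw [hA]
    exact ⟨by rw [hnorm r hr]; exact hr.1, by rw [hnorm r hr]; exact hr.2⟩
  -- open annulus
  set O : Set E := (fun x => ‖x‖) ⁻¹' Ioo r₀ r₁ with hO
  have hOopen : IsOpen O := isOpen_Ioo.preimage continuous_norm
  have hOA : O ⊆ A := by
    rw [hA]; intro x hx; exact ⟨hx.1.le, hx.2.le⟩
  have hmemO : ∀ r ∈ Ioo r₀ r₁, r • ω ∈ O := by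
    intro r hr
    have : ‖r • ω‖ = r := by
      rw [norm_smul, hω, mul_one, Real.norm_eq_abs, abs_of_pos (hr₀.trans hr.1)]
    simpa [hO, this] using hr
  -- C² at interior points
  have hCd : ∀ r ∈ Ioo r₀ r₁, ContDiffAt ℝ 2 u (r • ω) := by
    intro r hr
    exact hu.contDiffAt (mem_nhds_iff.mpr ⟨O, hOA, hOopen, hmemO r hr⟩)
  have hint : interior (Icc r₀ r₁) = Ioo r₀ r₁ := interior_Icc
  refine convexOn_of_hasDerivWithinAt2_nonneg (convex_Icc _ _)
    (f' := fun r => fderiv ℝ u (r • ω) ω + M * r)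
    (f'' := fun r => fderiv ℝ (fderiv ℝ u) (r • ω) ω ω + M)
    ?_ ?_ ?_ ?_
  · -- continuity
    apply ContinuousOn.add
    · exact (hu.continuousOn.comp (Continuous.continuousOn (by fun_prop)) hmem)
    · fun_prop
  · intro r hr
    rw [hint] at hr ⊢
    have hℓ : HasDerivAt (fun r : ℝ => r • ω) ω r := by
      simpa using (hasDerivAt_id r).smul_const ω
    have h1 : HasDerivAt (fun r : ℝ => u (r • ω)) (fderiv ℝ u (r • ω) ω) r :=
      (((hCd r hr).differentiableAt (by norm_num)).hasFDerivAt).comp_hasDerivAt r hℓ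
    have h2 : HasDerivAt (fun r : ℝ => M / 2 * r ^ 2) (M * r) r := by
      have := (hasDerivAt_pow 2 r).const_mul (M / 2)
      exact this.congr_deriv (by ring)
    exact ((h1.add h2).hasDerivWithinAt)
  · intro r hr
    rw [hint] at hr ⊢
    have hℓ : HasDerivAt (fun r : ℝ => r • ω) ω r := by
      simpa using (hasDerivAt_id r).smul_const ω
    have hd2 : DifferentiableAt ℝ (fderiv ℝ u) (r • ω) :=
      (((hCd r hr).fderiv_right (m := 1) (by norm_num)).differentiableAt (by norm_num))
    have h1 : HasDerivAt (fun r : ℝ => fderiv ℝ u (r • ω))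
        (fderiv ℝ (fderiv ℝ u) (r • ω) ω) r :=
      (hd2.hasFDerivAt).comp_hasDerivAt r hℓ
    have h2 : HasDerivAt (fun r : ℝ => fderiv ℝ u (r • ω) ω)
        (fderiv ℝ (fderiv ℝ u) (r • ω) ω ω) r := by
      have := h1.clm_apply (hasDerivAt_const r ω)
      simpa using this
    have h3 : HasDerivAt (fun r : ℝ => M * r) M r := by
      simpa using (hasDerivAt_id r).const_mul M
    exact ((h2.add h3).hasDerivWithinAt)
  · intro r hr
    rw [hint] at hr
    set x := r • ω with hx
    have hxO : x ∈ O := hmemO r hr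
    have hxA : x ∈ A := hOA hxO
    have hAnhds : A ∈ nhds x := mem_nhds_iff.mpr ⟨O, hOA, hOopen, hxO⟩
    have heq : iteratedFDerivWithin ℝ 2 u A x = iteratedFDeriv ℝ 2 u x := by
      rw [iteratedFDerivWithin_congr_set (t := univ) ?he 2, iteratedFDerivWithin_univ]
      · filter_upwards [hAnhds] with y hy
        simp only [eq_iff_iff]
        exact iff_of_true hy trivial
    have hb : ‖iteratedFDeriv ℝ 2 u x‖ ≤ M := heq ▸ hM x hxA
    have hval : |iteratedFDeriv ℝ 2 u x ![ω, ω]| ≤ M := by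
      have := (iteratedFDeriv ℝ 2 u x).le_opNorm ![ω, ω]
      rw [Real.norm_eq_abs] at this
      calc |iteratedFDeriv ℝ 2 u x ![ω, ω]| ≤
          ‖iteratedFDeriv ℝ 2 u x‖ * ∏ i, ‖(![ω, ω] : Fin 2 → E) i‖ := this
        _ = ‖iteratedFDeriv ℝ 2 u x‖ := by simp [Fin.prod_univ_two, hω]
        _ ≤ M := hb
    have happ : iteratedFDeriv ℝ 2 u x ![ω, ω] = fderiv ℝ (fderiv ℝ u) x ω ω := by
      simpa using iteratedFDeriv_two_apply u x ![ω, ω]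
    show 0 ≤ fderiv ℝ (fderiv ℝ u) (r • ω) ω ω + M
    rw [← happ]
    linarith [abs_le.mp hval]

end Ray

/-- If `u` is `C²` on the closed annulus `{x : r₀ ≤ |x| ≤ r₁}` with Hessian bounded
by `M` in operator norm, then `r ↦ sup_{|x|=r} u(x) + (M/2) r²` is convex on `[r₀, r₁]`. -/
theorem sup_on_spheres_semiconvex (n : ℕ) (hn : 2 ≤ n)
    (u : EuclideanSpace ℝ (Fin n) → ℝ) (r₀ r₁ M : ℝ) (hr₀ : 0 < r₀) (hr : r₀ < r₁)
    (A : Set (EuclideanSpace ℝ (Fin n)))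
    (hA : A = {x : EuclideanSpace ℝ (Fin n) | r₀ ≤ ‖x‖ ∧ ‖x‖ ≤ r₁})
    (hu : ContDiffOn ℝ 2 u A)
    (hM : ∀ x ∈ A, ‖iteratedFDerivWithin ℝ 2 u A x‖ ≤ M) :
    ConvexOn ℝ (Icc r₀ r₁)
      (fun r => sSup (u '' sphere (0 : EuclideanSpace ℝ (Fin n)) r) + M / 2 * r ^ 2) := by
  haveI : Nonempty (Fin n) := ⟨⟨0, by omega⟩⟩
  haveI : Nontrivial (EuclideanSpace ℝ (Fin n)) := inferInstance
  have hsub : ∀ r ∈ Icc r₀ r₁, sphere (0 : EuclideanSpace ℝ (Fin n)) r ⊆ A := by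
    intro r hrr x hx
    rw [mem_sphere_zero_iff_norm] at hx
    rw [hA]
    exact ⟨hx ▸ hrr.1, hx ▸ hrr.2⟩
  -- boundedness and membership facts for sup
  have hbdd : ∀ r ∈ Icc r₀ r₁, BddAbove (u '' sphere (0 : EuclideanSpace ℝ (Fin n)) r) := by
    intro r hrr
    exact ((isCompact_sphere (0 : EuclideanSpace ℝ (Fin n)) r).image_of_continuousOn
      (hu.continuousOn.mono (hsub r hrr))).bddAbove
  have hle : ∀ r ∈ Icc r₀ r₁, ∀ x ∈ sphere (0 : EuclideanSpace ℝ (Fin n)) r,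
      u x ≤ sSup (u '' sphere (0 : EuclideanSpace ℝ (Fin n)) r) := by
    intro r hrr x hx
    exact le_csSup (hbdd r hrr) (mem_image_of_mem u hx)
  refine ⟨convex_Icc _ _, ?_⟩
  intro a ha b hb s t hs ht hst
  set r : ℝ := s * a + t * b with hrdef
  have hrmem : r ∈ Icc r₀ r₁ := (convex_Icc r₀ r₁) ha hb hs ht hst
  have hrpos : 0 < r := lt_of_lt_of_le hr₀ hrmem.1
  simp only [smul_eq_mul]
  -- bound each element of the image
  have key : ∀ y ∈ u '' sphere (0 : EuclideanSpace ℝ (Fin n)) r,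
      y + M / 2 * r ^ 2 ≤
        s * (sSup (u '' sphere (0 : EuclideanSpace ℝ (Fin n)) a) + M / 2 * a ^ 2) +
        t * (sSup (u '' sphere (0 : EuclideanSpace ℝ (Fin n)) b) + M / 2 * b ^ 2) := by
    rintro y ⟨x, hx, rfl⟩
    have hxn : ‖x‖ = r := mem_sphere_zero_iff_norm.mp hx
    set ω : EuclideanSpace ℝ (Fin n) := r⁻¹ • x with hωdef
    have hω : ‖ω‖ = 1 := by
      rw [hωdef, norm_smul, hxn, Real.norm_eq_abs, abs_of_pos (inv_pos.mpr hrpos),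
        inv_mul_cancel₀ hrpos.ne']
    have hxω : x = r • ω := by
      rw [hωdef, smul_smul, mul_inv_cancel₀ hrpos.ne', one_smul]
    have hray := ray_convex u r₀ r₁ M hr₀ A hA hu hM ω hω
    have hconv := hray.2 ha hb hs ht hst
    simp only [smul_eq_mul] at hconv
    have haω : a • ω ∈ sphere (0 : EuclideanSpace ℝ (Fin n)) a := by
      rw [mem_sphere_zero_iff_norm, norm_smul, hω, mul_one, Real.norm_eq_abs,
        abs_of_pos (hr₀.trans_le ha.1)]
    have hbω : b • ω ∈ sphere (0 : EuclideanSpace ℝ (Fin n)) b := by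
      rw [mem_sphere_zero_iff_norm, norm_smul, hω, mul_one, Real.norm_eq_abs,
        abs_of_pos (hr₀.trans_le hb.1)]
    have h1 : u (a • ω) ≤ sSup (u '' sphere (0 : EuclideanSpace ℝ (Fin n)) a) :=
      hle a ha _ haω
    have h2 : u (b • ω) ≤ sSup (u '' sphere (0 : EuclideanSpace ℝ (Fin n)) b) :=
      hle b hb _ hbω
    rw [hxω]
    nlinarith [hconv, mul_le_mul_of_nonneg_left h1 hs, mul_le_mul_of_nonneg_left h2 ht]
  have hne : (u '' sphere (0 : EuclideanSpace ℝ (Fin n)) r).Nonempty :=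
    (NormedSpace.sphere_nonempty.mpr hrpos.le).image u
  have hsup : sSup (u '' sphere (0 : EuclideanSpace ℝ (Fin n)) r) ≤
      s * (sSup (u '' sphere (0 : EuclideanSpace ℝ (Fin n)) a) + M / 2 * a ^ 2) +
      t * (sSup (u '' sphere (0 : EuclideanSpace ℝ (Fin n)) b) + M / 2 * b ^ 2) -
      M / 2 * r ^ 2 :=
    csSup_le hne (fun y hy => by linarith [key y hy])
  rw [← hrdef]
  linarith [hsup]
end

section
/- Let u : A → ℝ be a C² function on the closed annulus A = {x ∈ ℝⁿ : r₀ ≤ |x| ≤ r₁} with 0 < r₀ < r₁, and suppose the Hessian of u is bounded in operator norm by M on A. Then the function r ↦ inf_{|x|=r} u(x) - (M/2) r² is concave on [r₀, r₁]. -/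
open Set Metric

/-- Concavity of `r ↦ u (r • e) - M/2 * r²` along a fixed unit direction `e`. -/
theorem line_semiconcave_aux (n : ℕ)
    (u : EuclideanSpace ℝ (Fin n) → ℝ) (r₀ r₁ M : ℝ) (hr₀ : 0 < r₀)
    (A : Set (EuclideanSpace ℝ (Fin n)))
    (hA : A = {x : EuclideanSpace ℝ (Fin n) | r₀ ≤ ‖x‖ ∧ ‖x‖ ≤ r₁})
    (hu : ContDiffOn ℝ 2 u A)
    (hM : ∀ x ∈ A, ‖iteratedFDerivWithin ℝ 2 u A x‖ ≤ M)
    (e : EuclideanSpace ℝ (Fin n)) (he : ‖e‖ = 1) :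
    ConcaveOn ℝ (Icc r₀ r₁) (fun r => u (r • e) - M / 2 * r ^ 2) := by
  set g : ℝ →L[ℝ] EuclideanSpace ℝ (Fin n) := ContinuousLinearMap.toSpanSingleton ℝ e with hg
  have hgapp : ∀ r : ℝ, g r = r • e := fun r => ContinuousLinearMap.toSpanSingleton_apply ℝ e r
  set O : Set (EuclideanSpace ℝ (Fin n)) := (fun x => ‖x‖) ⁻¹' Ioo r₀ r₁ with hOdef
  have hO : IsOpen O := isOpen_Ioo.preimage continuous_norm
  have hOA : O ⊆ A := by
    intro x hx
    simp only [hOdef, mem_preimage, mem_Ioo] at hx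
    exact hA ▸ ⟨hx.1.le, hx.2.le⟩
  set P : Set ℝ := g ⁻¹' O with hPdef
  have hP : IsOpen P := hO.preimage g.continuous
  have hIooP : Ioo r₀ r₁ ⊆ P := by
    intro r hr
    simp only [hPdef, mem_preimage, hOdef, hgapp, mem_Ioo]
    rw [norm_smul, he, Real.norm_eq_abs, abs_of_pos (hr₀.trans hr.1), mul_one]
    exact hr
  have hφ : ContDiffOn ℝ 2 (u ∘ g) P := (hu.mono hOA).comp_continuousLinearMap g
  have hφ1 : ContDiffOn ℝ 1 (deriv (u ∘ g)) P := hφ.deriv_of_isOpen hP (by norm_num)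
  -- the second derivative bound
  have key : ∀ r ∈ Ioo r₀ r₁, |deriv^[2] (u ∘ g) r| ≤ M := by
    intro r hr
    have hrP : r ∈ P := hIooP hr
    have hgrO : g r ∈ O := hrP
    have comp := g.iteratedFDerivWithin_comp_right (f := u) (hu.mono hOA) hO.uniqueDiffOn
      hP.uniqueDiffOn hgrO (by exact_mod_cast le_rfl)
    have h1 : deriv^[2] (u ∘ g) r = iteratedFDeriv ℝ 2 (u ∘ g) r (fun _ => (1 : ℝ)) := by
      rw [← iteratedDeriv_eq_iterate, iteratedDeriv_eq_iteratedFDeriv]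
    have h2 : iteratedFDeriv ℝ 2 (u ∘ g) r = iteratedFDerivWithin ℝ 2 (u ∘ g) P r :=
      (iteratedFDerivWithin_of_isOpen 2 hP hrP).symm
    have h3 : iteratedFDerivWithin ℝ 2 u O (g r) = iteratedFDerivWithin ℝ 2 u A (g r) := by
      have : A ∩ O = O := inter_eq_self_of_subset_right hOA
      rw [← this, iteratedFDerivWithin_inter (hO.mem_nhds hgrO)]
    have hbound : ‖iteratedFDerivWithin ℝ 2 u O (g r)‖ ≤ M := by
      rw [h3]; exact hM _ (hOA hgrO)
    rw [h1, h2, comp]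
    calc |(iteratedFDerivWithin ℝ 2 u O (g r)).compContinuousLinearMap (fun _ => g)
          (fun _ => (1 : ℝ))|
        = ‖iteratedFDerivWithin ℝ 2 u O (g r) (fun _ => g 1)‖ := by
          rw [ContinuousMultilinearMap.compContinuousLinearMap_apply]
          simp [Real.norm_eq_abs]
      _ ≤ ‖iteratedFDerivWithin ℝ 2 u O (g r)‖ * ∏ _i : Fin 2, ‖g 1‖ :=
          (iteratedFDerivWithin ℝ 2 u O (g r)).le_opNorm _
      _ ≤ M * 1 := by
          apply mul_le_mul hbound _ (by positivity)
            ((norm_nonneg _).trans hbound)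
          have : ‖g 1‖ = 1 := by rw [hgapp]; simp [he]
          simp [this]
      _ = M := mul_one M
  -- differentiability facts at interior points
  have hφdiff : ∀ s ∈ P, DifferentiableAt ℝ (u ∘ g) s := fun s hs =>
    (hφ.contDiffAt (hP.mem_nhds hs)).differentiableAt (by norm_num)
  have hφ'diff : ∀ s ∈ P, DifferentiableAt ℝ (deriv (u ∘ g)) s := fun s hs =>
    (hφ1.contDiffAt (hP.mem_nhds hs)).differentiableAt (by norm_num)
  have hqd : ∀ s : ℝ, deriv (fun t : ℝ => M / 2 * t ^ 2) s = M * s := by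
    intro s
    rw [deriv_const_mul _ (by fun_prop)]
    simp [deriv_pow]
    ring
  have hfeq : (fun r : ℝ => u (r • e) - M / 2 * r ^ 2)
      = fun r => (u ∘ g) r - M / 2 * r ^ 2 := by
    ext r; simp [Function.comp, hgapp]
  rw [hfeq]
  have hderiv_eq : ∀ s ∈ P, deriv (fun r => (u ∘ g) r - M / 2 * r ^ 2) s
      = deriv (u ∘ g) s - M * s := by
    intro s hs
    rw [deriv_fun_sub (hφdiff s hs) (by fun_prop), hqd]
  apply concaveOn_of_deriv2_nonpos (convex_Icc r₀ r₁)
  · -- continuity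
    apply ContinuousOn.sub
    · apply hu.continuousOn.comp (g.continuous.continuousOn)
      intro r hrI
      have hnorm : ‖g r‖ = r := by
        rw [hgapp, norm_smul, he, Real.norm_eq_abs, abs_of_pos (hr₀.trans_le hrI.1), mul_one]
      rw [hA]
      exact ⟨by rw [hnorm]; exact hrI.1, by rw [hnorm]; exact hrI.2⟩
    · fun_prop
  · rw [interior_Icc]
    intro s hs
    exact ((hφdiff s (hIooP hs)).sub (by fun_prop)).differentiableWithinAt
  · rw [interior_Icc]
    intro s hs
    have : DifferentiableAt ℝ (fun t => deriv (u ∘ g) t - M * t) s :=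
      (hφ'diff s (hIooP hs)).sub (by fun_prop)
    have heq : deriv (fun r => (u ∘ g) r - M / 2 * r ^ 2)
        =ᶠ[nhds s] fun t => deriv (u ∘ g) t - M * t :=
      Filter.eventuallyEq_of_mem (hP.mem_nhds (hIooP hs)) hderiv_eq
    exact (this.congr_of_eventuallyEq heq).differentiableWithinAt
  · rw [interior_Icc]
    intro s hs
    have heq : deriv (fun r => (u ∘ g) r - M / 2 * r ^ 2)
        =ᶠ[nhds s] fun t => deriv (u ∘ g) t - M * t :=
      Filter.eventuallyEq_of_mem (hP.mem_nhds (hIooP hs)) hderiv_eq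
    have : deriv^[2] (fun r => (u ∘ g) r - M / 2 * r ^ 2) s
        = deriv (deriv (u ∘ g)) s - M := by
      show deriv (deriv (fun r => (u ∘ g) r - M / 2 * r ^ 2)) s = _
      have hlin : deriv (fun t : ℝ => M * t) s = M := by
        rw [deriv_const_mul _ (by fun_prop)]; simp
      rw [heq.deriv_eq, deriv_fun_sub (hφ'diff s (hIooP hs)) (by fun_prop), hlin]
    rw [this]
    have := key s hs
    have h2 : deriv (deriv (u ∘ g)) s = deriv^[2] (u ∘ g) s := rfl
    rw [h2]
    have := abs_le.1 (key s hs)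
    linarith [this.2]

/-- If `u` is `C²` on the closed annulus `{x : r₀ ≤ |x| ≤ r₁}` with Hessian bounded
by `M` in operator norm, then `r ↦ inf_{|x|=r} u(x) - (M/2) r²` is concave on `[r₀, r₁]`. -/
theorem inf_on_spheres_semiconcave (n : ℕ) (hn : 2 ≤ n)
    (u : EuclideanSpace ℝ (Fin n) → ℝ) (r₀ r₁ M : ℝ) (hr₀ : 0 < r₀) (hr : r₀ < r₁)
    (A : Set (EuclideanSpace ℝ (Fin n)))
    (hA : A = {x : EuclideanSpace ℝ (Fin n) | r₀ ≤ ‖x‖ ∧ ‖x‖ ≤ r₁})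
    (hu : ContDiffOn ℝ 2 u A)
    (hM : ∀ x ∈ A, ‖iteratedFDerivWithin ℝ 2 u A x‖ ≤ M) :
    ConcaveOn ℝ (Icc r₀ r₁)
      (fun r => sInf (u '' sphere (0 : EuclideanSpace ℝ (Fin n)) r) - M / 2 * r ^ 2) := by
  haveI : Nontrivial (EuclideanSpace ℝ (Fin n)) :=
    ⟨⟨EuclideanSpace.single (⟨0, by omega⟩ : Fin n) (1 : ℝ), 0,
      fun h => by simpa using congrArg norm h⟩⟩
  -- basic facts about spheres of radius r ∈ [r₀, r₁]
  have hsubA : ∀ r ∈ Icc r₀ r₁, sphere (0 : EuclideanSpace ℝ (Fin n)) r ⊆ A := by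
    intro r hrI x hx
    rw [mem_sphere_zero_iff_norm] at hx
    rw [hA]
    exact ⟨hx ▸ hrI.1, hx ▸ hrI.2⟩
  have hcont : ∀ r ∈ Icc r₀ r₁,
      ContinuousOn u (sphere (0 : EuclideanSpace ℝ (Fin n)) r) := fun r hrI =>
    hu.continuousOn.mono (hsubA r hrI)
  have hne : ∀ r ∈ Icc r₀ r₁,
      (sphere (0 : EuclideanSpace ℝ (Fin n)) r).Nonempty := fun r hrI =>
    NormedSpace.sphere_nonempty.2 (le_of_lt (hr₀.trans_le hrI.1))
  have hbdd : ∀ r ∈ Icc r₀ r₁, BddBelow (u '' sphere (0 : EuclideanSpace ℝ (Fin n)) r) :=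
    fun r hrI => ((isCompact_sphere 0 r).image_of_continuousOn (hcont r hrI)).bddBelow
  constructor
  · exact convex_Icc r₀ r₁
  intro a ha b hb s t hs ht hst
  set c : ℝ := s • a + t • b with hc
  have hcI : c ∈ Icc r₀ r₁ := (convex_Icc r₀ r₁) ha hb hs ht hst
  have hcpos : 0 < c := hr₀.trans_le hcI.1
  -- a minimizer on the sphere of radius c
  obtain ⟨x, hx, hmin⟩ := (isCompact_sphere (0 : EuclideanSpace ℝ (Fin n)) c).exists_isMinOn
    (hne c hcI) (hcont c hcI)
  have hxnorm : ‖x‖ = c := mem_sphere_zero_iff_norm.1 hx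
  set e : EuclideanSpace ℝ (Fin n) := c⁻¹ • x with he'
  have he : ‖e‖ = 1 := by
    rw [he', norm_smul, hxnorm, Real.norm_eq_abs, abs_of_pos (inv_pos.2 hcpos),
      inv_mul_cancel₀ hcpos.ne']
  have hce : c • e = x := smul_inv_smul₀ hcpos.ne' x
  have hre : ∀ r ∈ Icc r₀ r₁, (r • e) ∈ sphere (0 : EuclideanSpace ℝ (Fin n)) r := by
    intro r hrI
    rw [mem_sphere_zero_iff_norm, norm_smul, he, Real.norm_eq_abs,
      abs_of_pos (hr₀.trans_le hrI.1), mul_one]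
  have hsInf_c : sInf (u '' sphere (0 : EuclideanSpace ℝ (Fin n)) c) = u x := by
    apply IsLeast.csInf_eq
    exact ⟨⟨x, hx, rfl⟩, by rintro _ ⟨y, hy, rfl⟩; exact hmin hy⟩
  have hle : ∀ r ∈ Icc r₀ r₁,
      sInf (u '' sphere (0 : EuclideanSpace ℝ (Fin n)) r) ≤ u (r • e) := fun r hrI =>
    csInf_le (hbdd r hrI) ⟨r • e, hre r hrI, rfl⟩
  have hcc := (line_semiconcave_aux n u r₀ r₁ M hr₀ A hA hu hM e he).2 ha hb hs ht hst
  simp only [smul_eq_mul] at hcc ⊢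
  have h1 : u (c • e) = u x := by rw [hce]
  calc s * (sInf (u '' sphere (0:EuclideanSpace ℝ (Fin n)) a) - M / 2 * a ^ 2)
        + t * (sInf (u '' sphere (0:EuclideanSpace ℝ (Fin n)) b) - M / 2 * b ^ 2)
      ≤ s * (u (a • e) - M / 2 * a ^ 2) + t * (u (b • e) - M / 2 * b ^ 2) := by
        apply add_le_add <;> apply mul_le_mul_of_nonneg_left _ (by assumption)
        · exact sub_le_sub_right (hle a ha) _
        · exact sub_le_sub_right (hle b hb) _
    _ ≤ u ((s * a + t * b) • e) - M / 2 * (s * a + t * b) ^ 2 := hcc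
    _ = sInf (u '' sphere (0:EuclideanSpace ℝ (Fin n)) (s * a + t * b))
        - M / 2 * (s * a + t * b) ^ 2 := by
        have : (s * a + t * b) = c := by rw [hc]; simp [smul_eq_mul]
        rw [this, h1, hsInf_c]
end

section
/- Let 1 < p < n, η = (n-p)/(p-1), and q = n(p-1)/(n-p). Let u be a positive C² radial function of r = |x| on an annulus, and under the change of variables t = η log(η/r), w(t) = (r/η)^η u(r), z(t) = w'(t), suppose w + z > 0 at a point t₀ where w is twice differentiable. If -Δ_p u ≤ u^q at the corresponding radius (as a radial expression), then z'(t₀) ≥ -z(t₀) - w(t₀)^q / ((p-1)(w(t₀)+z(t₀))^{p-2}). -/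
open Set Real

private lemma abs_rpow_aux (p y : ℝ) (hy : y < 0) :
    |y| ^ (p - 2) * y = -((-y) ^ (p - 1)) := by
  have h : (0:ℝ) < -y := by linarith
  rw [abs_of_neg hy, show p - 1 = (p - 2) + 1 by ring, Real.rpow_add h, Real.rpow_one]
  ring

set_option maxHeartbeats 1000000 in
/-- Under the change of variables `t = η log(η/r)`, `u(r) = e^t w(t)`, the radial differential
inequality `-Δ_p u ≤ u^q` transforms into the first-order inequality
`z' ≥ -z - w^q / ((p-1)(w+z)^{p-2})` for `z = w'`, wherever `w + z > 0`. -/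
theorem radial_ode_transform (n : ℕ) (hn : 2 ≤ n) (p q η : ℝ)
    (hp1 : 1 < p) (hpn : p < n)
    (hη : η = ((n : ℝ) - p) / (p - 1)) (hq : q = (n : ℝ) * (p - 1) / ((n : ℝ) - p))
    (a b : ℝ) (ha : 0 < a) (hab : a < b)
    (U : ℝ → ℝ) (hU : ContDiffOn ℝ 2 U (Ioo a b)) (hUpos : ∀ r ∈ Ioo a b, 0 < U r)
    (w z : ℝ → ℝ)
    (hw : w = fun t => Real.exp (-t) * U (η * Real.exp (-t / η)))
    (hz : z = deriv w)
    (t₀ r₀ : ℝ) (hr₀ : r₀ = η * Real.exp (-t₀ / η)) (hr₀mem : r₀ ∈ Ioo a b)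
    (hwz : 0 < w t₀ + z t₀)
    (hineq : -(r₀ ^ ((1 : ℝ) - n) *
        deriv (fun r => r ^ ((n : ℝ) - 1) * |deriv U r| ^ (p - 2) * deriv U r) r₀)
      ≤ U r₀ ^ q) :
    deriv z t₀ ≥ -z t₀ - w t₀ ^ q / ((p - 1) * (w t₀ + z t₀) ^ (p - 2)) := by
  have hp0 : (0:ℝ) < p - 1 := by linarith
  have hnp : (0:ℝ) < (n:ℝ) - p := by linarith
  have hη0 : 0 < η := by rw [hη]; positivity
  have hηp : η * (p - 1) = (n:ℝ) - p := by rw [hη]; field_simp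
  have hr0pos : 0 < r₀ := ha.trans hr₀mem.1
  set g := deriv U with hg
  set F : ℝ → ℝ := fun r => r ^ ((n : ℝ) - 1) * |g r| ^ (p - 2) * g r with hF
  -- the radius as a function of t
  set R : ℝ → ℝ := fun t => η * Real.exp (-t / η) with hR
  have hRt₀ : R t₀ = r₀ := hr₀.symm
  have hRpos : ∀ t, 0 < R t := fun t => by rw [hR]; positivity
  have hRder : ∀ t, HasDerivAt R (-(R t) / η) t := by
    intro t
    have h1 : HasDerivAt (fun t : ℝ => -t / η) (-1 / η) t := (hasDerivAt_id t).neg.div_const η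
    have h2 : HasDerivAt (fun y => η * Real.exp (-y / η)) (η * (Real.exp (-t / η) * (-1 / η))) t :=
      (h1.exp).const_mul η
    convert h2 using 1
    simp only [hR]
    field_simp
  have hRcont : Continuous R := by
    rw [hR]; fun_prop
  -- regularity of U and g
  have hUder : ∀ ρ ∈ Ioo a b, HasDerivAt U (g ρ) ρ := fun ρ hρ =>
    ((hU.differentiableOn (by norm_num)).differentiableAt (isOpen_Ioo.mem_nhds hρ)).hasDerivAt
  have hgC1 : ContDiffOn ℝ 1 g (Ioo a b) := by
    rw [hg]
    exact hU.deriv_of_isOpen isOpen_Ioo (by norm_num)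
  have hgdiff : ∀ ρ ∈ Ioo a b, DifferentiableAt ℝ g ρ := fun ρ hρ =>
    (hgC1.differentiableOn one_ne_zero).differentiableAt (isOpen_Ioo.mem_nhds hρ)
  -- the set where everything lives
  have hSmem : R ⁻¹' (Ioo a b) ∈ nhds t₀ :=
    (isOpen_Ioo.preimage hRcont).mem_nhds (by simp [mem_preimage, hRt₀, hr₀mem])
  -- derivative of w
  set φ : ℝ → ℝ := fun t => -(w t) - Real.exp (-t) * (R t / η) * g (R t) with hφ
  have hwder : ∀ t, R t ∈ Ioo a b → HasDerivAt w (φ t) t := by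
    intro t ht
    have h1 : HasDerivAt (fun t : ℝ => Real.exp (-t)) (-Real.exp (-t)) t := by
      have := (hasDerivAt_neg t).exp
      convert this using 1; ring
    have h2 : HasDerivAt (fun t => U (R t)) (g (R t) * (-(R t) / η)) t :=
      (hUder (R t) ht).comp t (hRder t)
    have h3 : HasDerivAt (fun t => Real.exp (-t) * U (R t)) _ t := h1.mul h2
    have hwt : w = fun t => Real.exp (-t) * U (R t) := hw
    rw [← hwt] at h3
    convert h3 using 1
    rw [hφ, hwt]
    field_simp
    ring
  have hzφ : z =ᶠ[nhds t₀] φ := by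
    filter_upwards [hSmem] with t ht
    rw [hz]; exact (hwder t ht).deriv
  have hz₀ : z t₀ = φ t₀ := hzφ.self_of_nhds
  have hwzev : ∀ᶠ t in nhds t₀, w t + z t = -(Real.exp (-t) * (R t / η) * g (R t)) := by
    filter_upwards [hzφ] with t ht
    rw [ht, hφ]; ring
  have hwz₀ : w t₀ + z t₀ = -(Real.exp (-t₀) * (r₀ / η) * g r₀) := by
    have := hwzev.self_of_nhds; rwa [hRt₀] at this
  -- sign of g at r₀
  have hgneg : g r₀ < 0 := by
    by_contra h
    push_neg at h
    have h1 : 0 < Real.exp (-t₀) * (r₀ / η) := by positivity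
    nlinarith [hwz, hwz₀, mul_nonneg h1.le h]
  -- g (R t) < 0 eventually
  have hgcont : ContinuousAt g r₀ :=
    (hgC1.continuousOn.continuousAt (isOpen_Ioo.mem_nhds hr₀mem))
  have hgRcont : ContinuousAt (fun t => g (R t)) t₀ := by
    have hgcont' : ContinuousAt g (R t₀) := by rwa [hRt₀]
    exact hgcont'.comp hRcont.continuousAt
  have hEvneg : ∀ᶠ t in nhds t₀, g (R t) < 0 := by
    have h0 : g (R t₀) < 0 := by rwa [hRt₀]
    exact hgRcont.eventually_lt_const h0
  -- main pointwise identity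
  have hGh : ∀ᶠ t in nhds t₀,
      F (R t) = -(η ^ ((n:ℝ) - 1) * (w t + z t) ^ (p - 1)) := by
    filter_upwards [hEvneg, hwzev] with t hgt hwzt
    have hRt : 0 < R t := hRpos t
    have hxpos : 0 < w t + z t := by
      have h1 : 0 < Real.exp (-t) * (R t / η) := by positivity
      rw [hwzt]; nlinarith
    have key1 : -(g (R t)) = Real.exp (t + t / η) * (w t + z t) := by
      have hRdiv : R t / η = Real.exp (-t / η) := by rw [hR]; field_simp
      rw [hwzt, hRdiv]
      have hone : Real.exp (t + t / η) * (Real.exp (-t) * Real.exp (-t / η)) = 1 := by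
        rw [← Real.exp_add, ← Real.exp_add, ← Real.exp_zero]
        congr 1
        ring
      nlinarith [hone]
    have hpow : (R t) ^ ((n:ℝ) - 1) = η ^ ((n:ℝ) - 1) * Real.exp ((-t / η) * ((n:ℝ) - 1)) := by
      rw [hR]
      rw [Real.mul_rpow hη0.le (Real.exp_pos _).le, ← Real.exp_mul]
    have hpow2 : (-(g (R t))) ^ (p - 1)
        = Real.exp ((t + t / η) * (p - 1)) * (w t + z t) ^ (p - 1) := by
      rw [key1, Real.mul_rpow (Real.exp_pos _).le hxpos.le, ← Real.exp_mul]
    have hzero : (-t / η) * ((n:ℝ) - 1) + (t + t / η) * (p - 1) = 0 := by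
      have h1 : η * η⁻¹ = 1 := mul_inv_cancel₀ hη0.ne'
      simp only [div_eq_mul_inv]
      linear_combination (-(t * (p - 1))) * h1 + t * η⁻¹ * hηp
    have hexp1 : Real.exp ((-t / η) * ((n:ℝ) - 1)) * Real.exp ((t + t / η) * (p - 1)) = 1 := by
      rw [← Real.exp_add, hzero, Real.exp_zero]
    calc F (R t) = (R t) ^ ((n:ℝ) - 1) * (|g (R t)| ^ (p - 2) * g (R t)) := by
            rw [hF]; ring
      _ = (R t) ^ ((n:ℝ) - 1) * (-((-(g (R t))) ^ (p - 1))) := by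
            rw [abs_rpow_aux p _ hgt]
      _ = -(η ^ ((n:ℝ) - 1) *
            (Real.exp ((-t / η) * ((n:ℝ) - 1)) * Real.exp ((t + t / η) * (p - 1))) *
            (w t + z t) ^ (p - 1)) := by rw [hpow, hpow2]; ring
      _ = -(η ^ ((n:ℝ) - 1) * (w t + z t) ^ (p - 1)) := by rw [hexp1]; ring
  -- differentiability of F at r₀
  have hFloc : F =ᶠ[nhds r₀] fun ρ => -(ρ ^ ((n:ℝ) - 1) * (-(g ρ)) ^ (p - 1)) := by
    have hev : ∀ᶠ ρ in nhds r₀, g ρ < 0 := hgcont.eventually_lt_const hgneg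
    filter_upwards [hev] with ρ hρ
    rw [hF]
    calc ρ ^ ((n:ℝ) - 1) * |g ρ| ^ (p - 2) * g ρ
        = ρ ^ ((n:ℝ) - 1) * (|g ρ| ^ (p - 2) * g ρ) := by ring
      _ = -(ρ ^ ((n:ℝ) - 1) * (-(g ρ)) ^ (p - 1)) := by rw [abs_rpow_aux p _ hρ]; ring
  have hFtdiff : DifferentiableAt ℝ (fun ρ => -(ρ ^ ((n:ℝ) - 1) * (-(g ρ)) ^ (p - 1))) r₀ := by
    have d1 : DifferentiableAt ℝ (fun ρ : ℝ => ρ ^ ((n:ℝ) - 1)) r₀ :=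
      (differentiableAt_id).rpow_const (Or.inl hr0pos.ne')
    have d2 : DifferentiableAt ℝ (fun ρ => (-(g ρ)) ^ (p - 1)) r₀ :=
      ((hgdiff r₀ hr₀mem).neg).rpow_const (Or.inl (by simpa using hgneg.ne))
    exact (d1.mul d2).neg
  set D := deriv F r₀ with hD
  have hFD : HasDerivAt F D r₀ := by
    have h := hFtdiff.hasDerivAt.congr_of_eventuallyEq hFloc
    rw [hD, h.deriv]; exact h
  -- chain rule: derivative of F ∘ R at t₀
  have hFD' : HasDerivAt F D (R t₀) := by rwa [hRt₀]
  have hGder : HasDerivAt (fun t => F (R t)) (D * (-r₀ / η)) t₀ := by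
    have := hFD'.comp t₀ (hRder t₀)
    rwa [hRt₀] at this
  -- derivative via the w, z formulation
  have ht₀S : R t₀ ∈ Ioo a b := by rwa [hRt₀]
  have hwt₀ : HasDerivAt w (z t₀) t₀ := by
    rw [hz₀]; exact hwder t₀ ht₀S
  have hφdiff : DifferentiableAt ℝ φ t₀ := by
    have dw : DifferentiableAt ℝ w t₀ := (hwder t₀ ht₀S).differentiableAt
    have dexp : DifferentiableAt ℝ (fun t : ℝ => Real.exp (-t)) t₀ := by fun_prop
    have dR : DifferentiableAt ℝ R t₀ := (hRder t₀).differentiableAt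
    have dgR : DifferentiableAt ℝ (fun t => g (R t)) t₀ := by
      have := (hgdiff r₀ hr₀mem)
      exact DifferentiableAt.comp t₀ (by rwa [← hRt₀] at this) dR
    rw [hφ]
    exact (dw.neg).sub ((dexp.mul (dR.div_const η)).mul dgR)
  have hzder : HasDerivAt z (deriv z t₀) t₀ := by
    have h := hφdiff.hasDerivAt.congr_of_eventuallyEq hzφ
    rw [h.deriv]; exact h
  set Z' := deriv z t₀ with hZ'
  have hsum : HasDerivAt (fun t => w t + z t) (z t₀ + Z') t₀ := hwt₀.add hzder
  have hrpowd : HasDerivAt (fun t => (w t + z t) ^ (p - 1))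
      ((z t₀ + Z') * (p - 1) * (w t₀ + z t₀) ^ (p - 1 - 1)) t₀ :=
    hsum.rpow_const (Or.inl hwz.ne')
  have hhd : HasDerivAt (fun t => -(η ^ ((n:ℝ) - 1) * (w t + z t) ^ (p - 1)))
      (-(η ^ ((n:ℝ) - 1) * ((z t₀ + Z') * (p - 1) * (w t₀ + z t₀) ^ (p - 2)))) t₀ := by
    rw [show p - 1 - 1 = p - 2 by ring] at hrpowd
    exact (hrpowd.const_mul (η ^ ((n:ℝ) - 1))).neg
  have hGder2 : HasDerivAt (fun t => F (R t))
      (-(η ^ ((n:ℝ) - 1) * ((z t₀ + Z') * (p - 1) * (w t₀ + z t₀) ^ (p - 2)))) t₀ :=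
    hhd.congr_of_eventuallyEq hGh
  have huniq : D * (-r₀ / η)
      = -(η ^ ((n:ℝ) - 1) * ((z t₀ + Z') * (p - 1) * (w t₀ + z t₀) ^ (p - 2))) :=
    hGder.unique hGder2
  -- solve for D
  set K := (p - 1) * (w t₀ + z t₀) ^ (p - 2) * (z t₀ + Z') with hK
  have hD_eq : D = η ^ ((n:ℝ) - 1) * K * η / r₀ := by
    have hηne : η ≠ 0 := hη0.ne'
    have hrne : r₀ ≠ 0 := hr0pos.ne'
    rw [hK]
    field_simp at huniq ⊢
    nlinarith [huniq]
  -- express things with exponentials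
  have hq' : q = (n:ℝ) / η := by
    rw [hq, hη]; field_simp
  have hw₀pos : 0 < w t₀ := by
    rw [hw]
    exact mul_pos (Real.exp_pos _) (hUpos _ (by rwa [← hr₀]))
  have hUr₀ : U r₀ = Real.exp t₀ * w t₀ := by
    rw [hw]
    simp only [← hr₀]
    rw [← mul_assoc, ← Real.exp_add]
    norm_num
  have hUq : U r₀ ^ q = Real.exp (t₀ * q) * w t₀ ^ q := by
    rw [hUr₀, Real.mul_rpow (Real.exp_pos _).le hw₀pos.le, ← Real.exp_mul]
  have hr₀pow : r₀ ^ ((1:ℝ) - n) = η ^ ((1:ℝ) - n) * Real.exp ((-t₀ / η) * ((1:ℝ) - n)) := by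
    rw [hr₀, Real.mul_rpow hη0.le (Real.exp_pos _).le, ← Real.exp_mul]
  have hηcancel : η ^ ((1:ℝ) - n) * η ^ ((n:ℝ) - 1) = 1 := by
    rw [← Real.rpow_add hη0]
    norm_num
  have hEr : η / r₀ = Real.exp (t₀ / η) := by
    rw [hr₀]
    rw [eq_comm, eq_div_iff (by positivity)]
    rw [show Real.exp (t₀ / η) * (η * Real.exp (-t₀ / η))
        = Real.exp (t₀ / η) * Real.exp (-t₀ / η) * η by ring,
      ← Real.exp_add, show t₀ / η + -t₀ / η = 0 by ring, Real.exp_zero, one_mul]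
  have hc : r₀ ^ ((1:ℝ) - n) * η ^ ((n:ℝ) - 1) * η / r₀ = Real.exp (t₀ * q) := by
    rw [hr₀pow, mul_div_assoc, hEr]
    have harg : (-t₀ / η) * ((1:ℝ) - n) + t₀ / η = t₀ * q := by
      rw [hq']
      field_simp
      ring
    calc η ^ ((1:ℝ) - n) * Real.exp ((-t₀ / η) * ((1:ℝ) - n)) * η ^ ((n:ℝ) - 1) *
          Real.exp (t₀ / η)
        = (η ^ ((1:ℝ) - n) * η ^ ((n:ℝ) - 1)) *
          (Real.exp ((-t₀ / η) * ((1:ℝ) - n)) * Real.exp (t₀ / η)) := by ring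
      _ = Real.exp (t₀ * q) := by rw [hηcancel, ← Real.exp_add, harg, one_mul]
  -- rewrite the hypothesis inequality
  rw [hD_eq, hUq] at hineq
  have hprod : r₀ ^ ((1:ℝ) - n) * (η ^ ((n:ℝ) - 1) * K * η / r₀) = Real.exp (t₀ * q) * K := by
    rw [← hc]; ring
  rw [hprod] at hineq
  have hKle : -K ≤ w t₀ ^ q := by
    have he := Real.exp_pos (t₀ * q)
    have h2 : Real.exp (t₀ * q) * (-K) ≤ Real.exp (t₀ * q) * (w t₀ ^ q) := by linarith
    exact le_of_mul_le_mul_left h2 he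
  -- conclude
  have hA : 0 < (p - 1) * (w t₀ + z t₀) ^ (p - 2) :=
    mul_pos hp0 (Real.rpow_pos_of_pos hwz _)
  have h3 : -(z t₀ + Z') ≤ w t₀ ^ q / ((p - 1) * (w t₀ + z t₀) ^ (p - 2)) := by
    rw [le_div_iff₀ hA]
    nlinarith [hKle]
  rw [ge_iff_le, hZ'] at *
  linarith [h3]
end

section
/- Let 1 < p < n, q = n(p-1)/(n-p) (so q - p + 1 = p(p-1)/(n-p) > 0). Fix ε ∈ (0,1) small, set k = 1/((p-1)(1-ε)) and δ = min{1/(2^p|p-2|), 1/(4(q-p+2))}·ε (with the first entry interpreted as +∞ when p = 2). If 0 < w ≤ (δ/k)^{(n-p)/(p(p-1))} and z = -k w^{q-p+2}, then the tangent-slope comparison holds: -1 + (1-ε)/|1 - k w^{q-p+1}|^{p-2} ≤ -ε/2 < -ε/4 ≤ -k(q-p+2) w^{q-p+1}. That is, the slope of the vector field along the barrier curve z = -k w^{q-p+2} is strictly below the slope of the barrier curve itself. -/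
open Real

set_option maxHeartbeats 1000000 in
/-- The algebraic slope comparison along the barrier curve `z = -k w^{q-p+2}`:
the slope of the vector field is strictly below the slope of the barrier curve. -/
theorem barrier_slope_comparison (n : ℕ) (hn : 2 ≤ n) (p q ε k δ : ℝ)
    (hp1 : 1 < p) (hpn : p < n)
    (hq : q = (n : ℝ) * (p - 1) / ((n : ℝ) - p))
    (hε0 : 0 < ε) (hε1 : ε < 1)
    (hk : k = 1 / ((p - 1) * (1 - ε)))
    (hδ : δ = (if p = 2 then 1 / (4 * (q - p + 2))
        else min (1 / (2 ^ p * |p - 2|)) (1 / (4 * (q - p + 2)))) * ε)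
    (w z : ℝ) (hw0 : 0 < w)
    (hw1 : w ≤ (δ / k) ^ (((n : ℝ) - p) / (p * (p - 1))))
    (hz : z = -k * w ^ (q - p + 2)) :
    -1 + (1 - ε) / |1 - k * w ^ (q - p + 1)| ^ (p - 2) ≤ -ε / 2 ∧
    -ε / 2 < -ε / 4 ∧
    -ε / 4 ≤ -k * (q - p + 2) * w ^ (q - p + 1) := by
  have hnp : (0:ℝ) < (n:ℝ) - p := by linarith
  have hp0 : (0:ℝ) < p - 1 := by linarith
  have hε' : (0:ℝ) < 1 - ε := by linarith
  have hk0 : 0 < k := by rw [hk]; positivity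
  have hA : q - p + 1 = p * (p - 1) / ((n:ℝ) - p) := by
    rw [hq]; field_simp; ring
  have hA0 : 0 < q - p + 1 := by rw [hA]; positivity
  have hq2 : 1 < q - p + 2 := by linarith
  have hδ0 : 0 < δ := by
    rw [hδ]
    have hpos : 0 < (if p = 2 then 1 / (4 * (q - p + 2))
        else min (1 / (2 ^ p * |p - 2|)) (1 / (4 * (q - p + 2)))) := by
      split_ifs with h
      · positivity
      · have h2 : (0:ℝ) < |p - 2| := abs_pos.2 (sub_ne_zero.2 h)
        have h2p : (0:ℝ) < (2:ℝ) ^ p := Real.rpow_pos_of_pos (by norm_num) p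
        apply lt_min <;> positivity
    positivity
  have hδle : δ ≤ 1 / (4 * (q - p + 2)) * ε := by
    rw [hδ]
    split_ifs with h
    · exact le_rfl
    · gcongr
      exact min_le_right _ _
  have hδ4 : δ < 1/4 := by
    have hX : (0:ℝ) < 4 * (q - p + 2) := by linarith
    have h1 : 1 / (4 * (q - p + 2)) * ε < 1 / (4 * (q - p + 2)) * (q - p + 2) := by
      apply mul_lt_mul_of_pos_left _ (by positivity)
      linarith
    have h2 : 1 / (4 * (q - p + 2)) * (q - p + 2) = 1/4 := by
      field_simp
    linarith
  -- bound on w ^ (q - p + 1)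
  have hwA : w ^ (q - p + 1) ≤ δ / k := by
    have h1 : w ^ (q - p + 1) ≤ ((δ / k) ^ (((n:ℝ) - p) / (p * (p - 1)))) ^ (q - p + 1) :=
      Real.rpow_le_rpow hw0.le hw1 hA0.le
    rwa [← Real.rpow_mul (by positivity), show ((n:ℝ) - p) / (p * (p - 1)) * (q - p + 1) = 1 by
      rw [hA]; field_simp, Real.rpow_one] at h1
  have hwA0 : 0 < w ^ (q - p + 1) := Real.rpow_pos_of_pos hw0 _
  have ht : k * w ^ (q - p + 1) ≤ δ := by
    have := mul_le_mul_of_nonneg_left hwA hk0.le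
    rwa [mul_div_cancel₀ _ (ne_of_gt hk0)] at this
  have ht0 : 0 < k * w ^ (q - p + 1) := mul_pos hk0 hwA0
  set t := k * w ^ (q - p + 1) with ht_def
  clear_value t
  have h1t : 0 < 1 - t := by linarith
  -- the key lower bound on the power
  have hkey : 1 - ε / 2 ≤ (1 - t) ^ (p - 2) := by
    rcases le_or_gt p 2 with hp2 | hp2
    · have h1 : (1:ℝ) ≤ (1 - t) ^ (p - 2) :=
        Real.one_le_rpow_of_pos_of_le_one_of_nonpos h1t (by linarith) (by linarith)
      linarith
    · -- p > 2
      have hne : p ≠ 2 := ne_of_gt hp2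
      have habs : |p - 2| = p - 2 := abs_of_pos (by linarith)
      have h2p4 : (4:ℝ) ≤ (2:ℝ) ^ p := by
        have h1 : (2:ℝ) ^ (2:ℝ) ≤ (2:ℝ) ^ p :=
          Real.rpow_le_rpow_of_exponent_le (by norm_num) (by linarith)
        have h2 : (2:ℝ) ^ (2:ℝ) = 4 := by
          rw [show (2:ℝ) = ((2:ℕ):ℝ) from by norm_num, Real.rpow_natCast]
          norm_num
        linarith
      have h2p0 : (0:ℝ) < (2:ℝ) ^ p := Real.rpow_pos_of_pos (by norm_num) p
      have hδp : δ ≤ 1 / ((2:ℝ) ^ p * (p - 2)) * ε := by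
        rw [hδ, if_neg hne, habs]
        gcongr
        exact min_le_left _ _
      -- hence (p-2) * t ≤ ε / 4
      have hpt : (p - 2) * t ≤ ε / 4 := by
        have h1 : (p - 2) * δ ≤ (p - 2) * (1 / ((2:ℝ) ^ p * (p - 2)) * ε) :=
          mul_le_mul_of_nonneg_left hδp (by linarith)
        have hne2 : p - 2 ≠ 0 := ne_of_gt (by linarith)
        have h2ne : ((2:ℝ) ^ p) ≠ 0 := ne_of_gt h2p0
        have h2 : (p - 2) * (1 / ((2:ℝ) ^ p * (p - 2)) * ε) = ε / (2:ℝ) ^ p := by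
          field_simp
        have h3 : ε / (2:ℝ) ^ p ≤ ε / 4 := by
          apply div_le_div_of_nonneg_left hε0.le (by norm_num) h2p4
        have h4 : (p - 2) * t ≤ (p - 2) * δ := mul_le_mul_of_nonneg_left ht (by linarith)
        linarith
      -- log bound: log (1 - t) ≥ - 2 t
      have hlog : -(2 * t) ≤ Real.log (1 - t) := by
        have hinv : 0 < (1 - t)⁻¹ := by positivity
        have h1 : Real.log (1 - t)⁻¹ ≤ (1 - t)⁻¹ - 1 := Real.log_le_sub_one_of_pos hinv
        rw [Real.log_inv] at h1
        have h2 : (1 - t)⁻¹ - 1 = t / (1 - t) := by field_simp; ring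
        have h3 : t / (1 - t) ≤ 2 * t := by
          rw [div_le_iff₀ h1t]
          nlinarith
        linarith
      have hexp : (1 - t) ^ (p - 2) = Real.exp (Real.log (1 - t) * (p - 2)) :=
        Real.rpow_def_of_pos h1t _
      have hbern : Real.log (1 - t) * (p - 2) + 1 ≤ (1 - t) ^ (p - 2) := by
        rw [hexp]
        exact Real.add_one_le_exp _
      have h5 : -(2 * t) * (p - 2) ≤ Real.log (1 - t) * (p - 2) :=
        mul_le_mul_of_nonneg_right hlog (by linarith)
      have h6 : -(2 * t) * (p - 2) = -(2 * ((p - 2) * t)) := by ring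
      linarith
  have hX0 : 0 < (1 - t) ^ (p - 2) := Real.rpow_pos_of_pos h1t _
  refine ⟨?_, by linarith, ?_⟩
  · -- first inequality
    rw [abs_of_pos h1t]
    have h7 : (1 - ε / 2) * (1 - ε / 2) ≤ (1 - ε / 2) * ((1 - t) ^ (p - 2)) :=
      mul_le_mul_of_nonneg_left hkey (by linarith)
    have h8 : 1 - ε ≤ (1 - ε / 2) * (1 - ε / 2) := by nlinarith [sq_nonneg ε]
    have h1 : (1 - ε) / (1 - t) ^ (p - 2) ≤ 1 - ε / 2 := by
      rw [div_le_iff₀ hX0]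
      linarith
    linarith
  · -- third inequality
    have hX : (0:ℝ) < q - p + 2 := by linarith
    have h1 : (q - p + 2) * t ≤ (q - p + 2) * δ := mul_le_mul_of_nonneg_left ht hX.le
    have h2 : (q - p + 2) * δ ≤ (q - p + 2) * (1 / (4 * (q - p + 2)) * ε) :=
      mul_le_mul_of_nonneg_left hδle hX.le
    have h3 : (q - p + 2) * (1 / (4 * (q - p + 2)) * ε) = ε / 4 := by
      field_simp
    have heq : k * (q - p + 2) * w ^ (q - p + 1) = (q - p + 2) * t := by
      rw [ht_def]; ring
    have h5 : k * (q - p + 2) * w ^ (q - p + 1) ≤ ε / 4 := by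
      rw [heq]; linarith
    linarith
end
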